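/- Fix k ≥ 1 and a line digraph I_k. Let 𝔻_k be the category whose objects are the digraph cubes I_k^n (n ≥ 0) and whose morphisms are generated under composition by the face inclusions δ_i^α : I_k^{n−1} → I_k^n for α ∈ {0,k} (inserting the vertex coordinate α at position i) and the projections σ_i : I_k^n → I_k^{n−1} (deleting the i-th coordinate), all of which are digraph maps. Then the category 𝔻_k is isomorphic to the box category □. -/

import Mathlib

noncomputable section

/-- Insert the value `c` at (1-based) position `i` into an `m`-tuple,
producing an `(m+1)`-tuple.  (The index is clamped into the valid range;
for `1 ≤ i ≤ m+1` this is exactly the face-insertion of the box category.) -/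
def finsert {X : Type} {m : ℕ} (i : ℕ) (c : X) (x : Fin m → X) : Fin (m + 1) → X :=
  Fin.insertNth ⟨min (i - 1) m, Nat.lt_succ_of_le (Nat.min_le_right _ _)⟩ c x

/-- Delete the (1-based) `i`-th coordinate of an `(m+1)`-tuple, producing an
`m`-tuple.  (The index is clamped into the valid range; for `1 ≤ i ≤ m+1`
this is exactly the projection of the box category.) -/
def fdelete {X : Type} {m : ℕ} (i : ℕ) (x : Fin (m + 1) → X) : Fin m → X :=
  fun j => x (Fin.succAbove ⟨min (i - 1) m, Nat.lt_succ_of_le (Nat.min_le_right _ _)⟩ j)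

/-- A digraph: a vertex set together with an (irreflexive, by intent)
adjacency relation `v → w`. -/
structure Dgraph where
  V : Type
  adj : V → V → Prop

/-- The line digraph `I_k` on vertices `{0,…,k}`: for each `0 ≤ i ≤ k-1`
exactly one arrow, `i → i+1` if `o i = true` and `i+1 → i` otherwise,
and no other arrows. -/
def lineDigraph (k : ℕ) (o : ℕ → Bool) : Dgraph where
  V := Fin (k + 1)
  adj v w := ∃ i : Fin k,
    (o i.val = true ∧ v = i.castSucc ∧ w = i.succ) ∨
    (o i.val = false ∧ v = i.succ ∧ w = i.castSucc)

/-- The `n`-cube digraph `I_k^n` (the `n`-fold box product of `I_k`):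
vertices are `n`-tuples, with an arrow when exactly one coordinate moves
along an arrow of `I_k` and all other coordinates agree. -/
def cubeDigraph (k : ℕ) (o : ℕ → Bool) (n : ℕ) : Dgraph where
  V := Fin n → Fin (k + 1)
  adj x y := ∃ j : Fin n, (lineDigraph k o).adj (x j) (y j) ∧ ∀ i, i ≠ j → x i = y i

/-- The morphisms of the category `𝔻_k`: all maps (on vertex sets of the cube
digraphs `I_k^n`) generated under composition by the face inclusions
`δᵢ^α` (`α ∈ {0,k}`, inserting the vertex coordinate `α` at 1-based position `i`)
and the projections `σᵢ` (deleting the `i`-th coordinate). -/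
inductive DkGen (k : ℕ) (o : ℕ → Bool) :
    (n m : ℕ) → ((Fin n → Fin (k + 1)) → (Fin m → Fin (k + 1))) → Prop
  | id (n : ℕ) : DkGen k o n n (fun x => x)
  | delta (n i : ℕ) (α : Bool) (h1 : 1 ≤ i) (h2 : i ≤ n + 1) :
      DkGen k o n (n + 1) (finsert i (if α then Fin.last k else 0))
  | sigma (n i : ℕ) (h1 : 1 ≤ i) (h2 : i ≤ n + 1) :
      DkGen k o (n + 1) n (fdelete i)
  | comp {n m l : ℕ} {f : (Fin n → Fin (k+1)) → (Fin m → Fin (k+1))}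
      {g : (Fin m → Fin (k+1)) → (Fin l → Fin (k+1))} :
      DkGen k o n m f → DkGen k o m l g → DkGen k o n l (fun x => g (f x))

/-- The morphisms of the box category `□`: all maps `𝕀^n → 𝕀^m` generated
under composition by the face inclusions `δᵢ^α` (`α ∈ 𝕀`) and projections `σᵢ`. -/
inductive BGen : (n m : ℕ) → ((Fin n → Bool) → (Fin m → Bool)) → Prop
  | id (n : ℕ) : BGen n n (fun x => x)
  | delta (n i : ℕ) (α : Bool) (h1 : 1 ≤ i) (h2 : i ≤ n + 1) : BGen n (n + 1) (finsert i α)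
  | sigma (n i : ℕ) (h1 : 1 ≤ i) (h2 : i ≤ n + 1) : BGen (n + 1) n (fdelete i)
  | comp {n m l : ℕ} {f : (Fin n → Bool) → (Fin m → Bool)}
      {g : (Fin m → Bool) → (Fin l → Bool)} :
      BGen n m f → BGen m l g → BGen n l (fun x => g (f x))

open CategoryTheory

/-- The category `𝔻_k`: objects are the cube digraphs `I_k^n` (indexed by `n`),
morphisms are the compositions of face inclusions and projections. -/
def DkCat (k : ℕ) (o : ℕ → Bool) : Type := ℕ

instance (k : ℕ) (o : ℕ → Bool) : Category (DkCat k o) where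
  Hom n m := { f : (Fin n → Fin (k + 1)) → (Fin m → Fin (k + 1)) // DkGen k o n m f }
  id n := ⟨fun x => x, DkGen.id n⟩
  comp f g := ⟨fun x => g.1 (f.1 x), DkGen.comp f.2 g.2⟩
  id_comp f := Subtype.ext rfl
  comp_id f := Subtype.ext rfl
  assoc f g h := Subtype.ext rfl

/-- The box category `□`: objects are the sets `𝕀^n` (indexed by `n`),
morphisms are the compositions of face inclusions and projections. -/
def BoxCat : Type := ℕ

instance : Category BoxCat where
  Hom n m := { f : (Fin n → Bool) → (Fin m → Bool) // BGen n m f }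
  id n := ⟨fun x => x, BGen.id n⟩
  comp f g := ⟨fun x => g.1 (f.1 x), BGen.comp f.2 g.2⟩
  id_comp f := Subtype.ext rfl
  comp_id f := Subtype.ext rfl
  assoc f g h := Subtype.ext rfl

/-! ### Auxiliary machinery: descriptions of generated maps -/

/-- A combinatorial description of a generated map: each output coordinate
either copies an input coordinate or is one of the two face constants. -/
def Desc (n m : ℕ) : Type := Fin m → (Fin n ⊕ Bool)

/-- Realize a description over any type, with chosen face values `v0, v1`. -/
def applyD {X : Type} (v0 v1 : X) {n m : ℕ} (d : Desc n m) (x : Fin n → X) : Fin m → X :=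
  fun j => Sum.elim x (fun b => if b then v1 else v0) (d j)

def compD {n m l : ℕ} (d1 : Desc n m) (d2 : Desc m l) : Desc n l :=
  fun j => Sum.elim d1 Sum.inr (d2 j)

def insD {n : ℕ} (p : Fin (n + 1)) (b : Bool) : Desc n (n + 1) :=
  Fin.insertNth p (Sum.inr b) Sum.inl

def delD {n : ℕ} (p : Fin (n + 1)) : Desc (n + 1) n :=
  fun j => Sum.inl (p.succAbove j)

lemma applyD_comp {X : Type} (v0 v1 : X) {n m l : ℕ} (d1 : Desc n m) (d2 : Desc m l) :
    applyD v0 v1 (compD d1 d2) =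
      fun x => applyD v0 v1 d2 (applyD v0 v1 d1 x) := by
  funext x j
  cases h : d2 j <;> simp [applyD, compD, h] <;> rfl

lemma applyD_ins {X : Type} (v0 v1 : X) {n : ℕ} (p : Fin (n + 1)) (b : Bool) (x : Fin n → X) :
    applyD v0 v1 (insD p b) x = Fin.insertNth p (if b then v1 else v0) x := by
  funext j
  rcases eq_or_ne j p with h | h
  · subst h; simp [applyD, insD]
  · obtain ⟨j', rfl⟩ := Fin.exists_succAbove_eq h
    simp [applyD, insD]

lemma applyD_inj {X : Type} {v0 v1 : X} (hv : v0 ≠ v1) {n m : ℕ} {d d' : Desc n m}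
    (h : applyD v0 v1 d = applyD v0 v1 d') : d = d' := by
  funext j
  have h0 := congrFun (congrFun h (fun _ => v0)) j
  have h1 := congrFun (congrFun h (fun _ => v1)) j
  cases hd : d j with
  | inl r =>
    cases hd' : d' j with
    | inl r' =>
      have he := congrFun (congrFun h (fun i => if i = r then v1 else v0)) j
      simp [applyD, hd, hd'] at he
      by_cases hr : r' = r
      · rw [hr]
      · simp [hr] at he; exact absurd he.symm hv
    | inr b =>
      simp [applyD, hd, hd'] at h0 h1
      cases b
      · simp at h1; exact absurd h1.symm hv
      · simp at h0; exact absurd h0 hv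
  | inr b =>
    cases hd' : d' j with
    | inl r' =>
      simp [applyD, hd, hd'] at h0 h1
      cases b
      · simp at h1; exact absurd h1 hv
      · simp at h0; exact absurd h0.symm hv
    | inr b' =>
      simp [applyD, hd, hd'] at h0
      cases b <;> cases b' <;> simp at h0 <;> first
        | rfl
        | exact absurd h0 hv
        | exact absurd h0.symm hv

/-- Every generated map of `𝔻_k` is the `(0, k)`-realization of a description whose
`(false,true)`-realization is a generated map of the box category. -/
lemma DkGen_desc {k : ℕ} {o : ℕ → Bool} {n m : ℕ}
    {f : (Fin n → Fin (k + 1)) → (Fin m → Fin (k + 1))} (h : DkGen k o n m f) :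
    ∃ d : Desc n m, f = applyD (0 : Fin (k + 1)) (Fin.last k) d ∧
      BGen n m (applyD false true d) := by
  induction h with
  | id n => exact ⟨Sum.inl, rfl, BGen.id n⟩
  | delta n i α h1 h2 =>
    refine ⟨insD ⟨min (i - 1) n, Nat.lt_succ_of_le (Nat.min_le_right _ _)⟩ α, ?_, ?_⟩
    · funext x
      exact (applyD_ins _ _ _ _ _).symm
    · have : applyD false true (insD ⟨min (i - 1) n,
          Nat.lt_succ_of_le (Nat.min_le_right _ _)⟩ α) = finsert i α := by
        funext x; rw [applyD_ins]; cases α <;> rfl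
      rw [this]; exact BGen.delta n i α h1 h2
  | sigma n i h1 h2 =>
    exact ⟨delD ⟨min (i - 1) n, Nat.lt_succ_of_le (Nat.min_le_right _ _)⟩, rfl,
      BGen.sigma n i h1 h2⟩
  | comp hf hg ihf ihg =>
    obtain ⟨d1, hd1, b1⟩ := ihf
    obtain ⟨d2, hd2, b2⟩ := ihg
    refine ⟨compD d1 d2, ?_, ?_⟩
    · rw [applyD_comp, ← hd1, ← hd2]
    · rw [applyD_comp]; exact BGen.comp b1 b2

/-- Every generated map of the box category is the `(false,true)`-realization of a
description whose `(0,k)`-realization is a generated map of `𝔻_k`. -/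
lemma BGen_desc (k : ℕ) (o : ℕ → Bool) {n m : ℕ}
    {g : (Fin n → Bool) → (Fin m → Bool)} (h : BGen n m g) :
    ∃ d : Desc n m, g = applyD false true d ∧
      DkGen k o n m (applyD (0 : Fin (k + 1)) (Fin.last k) d) := by
  induction h with
  | id n => exact ⟨Sum.inl, rfl, DkGen.id n⟩
  | delta n i α h1 h2 =>
    refine ⟨insD ⟨min (i - 1) n, Nat.lt_succ_of_le (Nat.min_le_right _ _)⟩ α, ?_, ?_⟩
    · funext x
      rw [applyD_ins]
      cases α <;> rfl
    · have : applyD (0 : Fin (k + 1)) (Fin.last k)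
          (insD ⟨min (i - 1) n, Nat.lt_succ_of_le (Nat.min_le_right _ _)⟩ α)
          = finsert i (if α then Fin.last k else 0) := by
        funext x; rw [applyD_ins]; rfl
      rw [this]; exact DkGen.delta n i α h1 h2
  | sigma n i h1 h2 =>
    exact ⟨delD ⟨min (i - 1) n, Nat.lt_succ_of_le (Nat.min_le_right _ _)⟩, rfl,
      DkGen.sigma n i h1 h2⟩
  | comp hf hg ihf ihg =>
    obtain ⟨d1, hd1, b1⟩ := ihf
    obtain ⟨d2, hd2, b2⟩ := ihg
    refine ⟨compD d1 d2, ?_, ?_⟩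
    · rw [applyD_comp, ← hd1, ← hd2]
    · rw [applyD_comp]; exact DkGen.comp b1 b2

lemma chooseD_eq {k : ℕ} {o : ℕ → Bool} (hv : (0 : Fin (k + 1)) ≠ Fin.last k) {n m : ℕ}
    {f : (Fin n → Fin (k + 1)) → (Fin m → Fin (k + 1))} (hf : DkGen k o n m f)
    {d : Desc n m} (hd : f = applyD (0 : Fin (k + 1)) (Fin.last k) d) :
    Classical.choose (DkGen_desc hf) = d :=
  applyD_inj hv ((Classical.choose_spec (DkGen_desc hf)).1.symm.trans hd)

lemma chooseB_eq (k : ℕ) (o : ℕ → Bool) {n m : ℕ}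
    {g : (Fin n → Bool) → (Fin m → Bool)} (hg : BGen n m g)
    {d : Desc n m} (hd : g = applyD false true d) :
    Classical.choose (BGen_desc k o hg) = d :=
  applyD_inj (by simp) ((Classical.choose_spec (BGen_desc k o hg)).1.symm.trans hd)

lemma zero_ne_last {k : ℕ} (hk : 1 ≤ k) : (0 : Fin (k + 1)) ≠ Fin.last k := by
  intro h
  have := congrArg Fin.val h
  simp [Fin.last] at this
  omega

open CategoryTheory in
/-- The functor `𝔻_k ⥤ □`. -/
def boxF (k : ℕ) (hk : 1 ≤ k) (o : ℕ → Bool) : DkCat k o ⥤ BoxCat where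
  obj n := n
  map {n m} f := ⟨applyD false true (Classical.choose (DkGen_desc f.2)),
    (Classical.choose_spec (DkGen_desc f.2)).2⟩
  map_id n := Subtype.ext (by
    have h : Classical.choose (DkGen_desc (k := k) (o := o) (DkGen.id n))
        = (Sum.inl : Desc n n) :=
      chooseD_eq (zero_ne_last hk) (DkGen.id (k := k) (o := o) n)
        (rfl : (fun x => x) = applyD (0 : Fin (k + 1)) (Fin.last k) (Sum.inl : Desc n n))
    exact congrArg (applyD false true) h)
  map_comp {n m l} f g := Subtype.ext (by
    have hdf := (Classical.choose_spec (DkGen_desc f.2)).1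
    have hdg := (Classical.choose_spec (DkGen_desc g.2)).1
    have h : Classical.choose (DkGen_desc (DkGen.comp f.2 g.2))
        = compD (Classical.choose (DkGen_desc f.2)) (Classical.choose (DkGen_desc g.2)) :=
      chooseD_eq (zero_ne_last hk) (DkGen.comp f.2 g.2)
        (d := compD (Classical.choose (DkGen_desc f.2)) (Classical.choose (DkGen_desc g.2)))
        (((applyD_comp _ _ _ _).trans (congrArg₂ (fun F G => fun x => G (F x)) hdf.symm hdg.symm)).symm)
    exact (congrArg (applyD false true) h).trans (applyD_comp _ _ _ _))

open CategoryTheory in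
/-- The functor `□ ⥤ 𝔻_k`. -/
def boxG (k : ℕ) (o : ℕ → Bool) : BoxCat ⥤ DkCat k o where
  obj n := n
  map {n m} g := ⟨applyD (0 : Fin (k + 1)) (Fin.last k) (Classical.choose (BGen_desc k o g.2)),
    (Classical.choose_spec (BGen_desc k o g.2)).2⟩
  map_id n := Subtype.ext (by
    have h : Classical.choose (BGen_desc k o (BGen.id n)) = (Sum.inl : Desc n n) :=
      chooseB_eq k o (BGen.id n)
        (rfl : (fun x => x) = applyD false true (Sum.inl : Desc n n))
    exact congrArg (applyD (0 : Fin (k + 1)) (Fin.last k)) h)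
  map_comp {n m l} f g := Subtype.ext (by
    have hdf := (Classical.choose_spec (BGen_desc k o f.2)).1
    have hdg := (Classical.choose_spec (BGen_desc k o g.2)).1
    have h : Classical.choose (BGen_desc k o (BGen.comp f.2 g.2))
        = compD (Classical.choose (BGen_desc k o f.2)) (Classical.choose (BGen_desc k o g.2)) :=
      chooseB_eq k o (BGen.comp f.2 g.2)
        (d := compD (Classical.choose (BGen_desc k o f.2)) (Classical.choose (BGen_desc k o g.2)))
        (((applyD_comp _ _ _ _).trans (congrArg₂ (fun F G => fun x => G (F x)) hdf.symm hdg.symm)).symm)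
    exact (congrArg (applyD (0 : Fin (k + 1)) (Fin.last k)) h).trans (applyD_comp _ _ _ _))

/-- For every `k ≥ 1` and every line digraph `I_k`
(orientation `o`), the category `𝔻_k` — whose objects are the digraph cubes
`I_k^n` and whose morphisms are generated by the face inclusions
`δᵢ^α` (`α ∈ {0,k}`) and projections `σᵢ` — is isomorphic to the box
category `□`. -/
theorem Dk_iso_box (k : ℕ) (hk : 1 ≤ k) (o : ℕ → Bool) :
    ∃ (F : DkCat k o ⥤ BoxCat) (G : BoxCat ⥤ DkCat k o),
      F ⋙ G = CategoryTheory.Functor.id (DkCat k o) ∧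
      G ⋙ F = CategoryTheory.Functor.id BoxCat := by
  refine ⟨boxF k hk o, boxG k o, ?_, ?_⟩
  · refine CategoryTheory.Functor.ext (fun n => rfl) (fun n m f => ?_)
    apply Subtype.ext
    have h : Classical.choose (BGen_desc k o ((boxF k hk o).map f).2)
        = Classical.choose (DkGen_desc f.2) :=
      chooseB_eq k o ((boxF k hk o).map f).2
        (d := Classical.choose (DkGen_desc f.2)) rfl
    exact (congrArg (applyD (0 : Fin (k + 1)) (Fin.last k)) h).trans
      (Classical.choose_spec (DkGen_desc f.2)).1.symm
  · refine CategoryTheory.Functor.ext (fun n => rfl) (fun n m g => ?_)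
    apply Subtype.ext
    have h : Classical.choose (DkGen_desc ((boxG k o).map g).2)
        = Classical.choose (BGen_desc k o g.2) :=
      chooseD_eq (zero_ne_last hk) ((boxG k o).map g).2
        (d := Classical.choose (BGen_desc k o g.2)) rfl
    exact (congrArg (applyD false true) h).trans
      (Classical.choose_spec (BGen_desc k o g.2)).1.symm
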